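/- (Proposition 1) Suppose V ≥ 0 with V(φ) = 0 ⟺ φ = 0, V' is bounded on every set on which V is bounded, and there is a constant K ≠ 0 such that χ'(φ)/χ(φ) ≤ 2K/((2−γ)(4−3γ)) for all φ. Then along any solution of the cosmological system with H(t₀) > 0, lim_{t→∞} (ρ_m(t), ρ_r(t), y(t)) = (0, 0, 0). -/

import Mathlib

open Filter Set Topology

lemma myAnti {f f' : ℝ → ℝ} {s : Set ℝ} (hs : Convex ℝ s)
    (hf : ∀ t ∈ s, HasDerivAt f (f' t) t) (h : ∀ t ∈ s, f' t ≤ 0) :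
    AntitoneOn f s := by
  apply antitoneOn_of_deriv_nonpos hs
  · exact fun t ht => (hf t ht).continuousAt.continuousWithinAt
  · exact fun t ht => ((hf t (interior_subset ht)).differentiableAt).differentiableWithinAt
  · intro t ht
    rw [(hf t (interior_subset ht)).deriv]
    exact h t (interior_subset ht)

lemma myBarbalat (g g' F F' : ℝ → ℝ) (a M c : ℝ) (hM : 0 < M) (hc : 0 < c)
    (hg0 : ∀ t, a ≤ t → 0 ≤ g t)
    (hgd : ∀ t, a ≤ t → HasDerivAt g (g' t) t)
    (hg' : ∀ t, a ≤ t → g' t ≤ M)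
    (hFd : ∀ t, a ≤ t → HasDerivAt F (F' t) t)
    (hF' : ∀ t, a ≤ t → F' t ≤ -c * g t)
    (hF0 : ∀ t, a ≤ t → 0 ≤ F t) :
    Tendsto g atTop (𝓝 0) := by
  by_contra hcon
  rw [Metric.tendsto_atTop] at hcon
  push_neg at hcon
  obtain ⟨ε, hε, hfreq⟩ := hcon
  set δ := ε/(2*M) with hδdef
  have hδ : 0 < δ := div_pos hε (by linarith)
  have hFanti : AntitoneOn F (Ici a) := by
    apply myAnti (convex_Ici a) (fun t ht => hFd t ht)
    intro t ht
    have := hF' t ht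
    have := hg0 t ht
    nlinarith
  set Δ := c*(ε/2)*δ with hΔdef
  have hΔ : 0 < Δ := by positivity
  have step : ∀ t, a + δ ≤ t → ε ≤ g t → F t ≤ F (t - δ) - Δ := by
    intro t htδ hgt
    have hta : a ≤ t - δ := by linarith
    have hglb : ∀ s ∈ Icc (t - δ) t, ε/2 ≤ g s := by
      intro s hs
      have anti : AntitoneOn (fun u => g u - M*u) (Icc (t-δ) t) := by
        apply myAnti (f' := fun u => g' u - M*1) (convex_Icc _ _)
        · intro u hu
          exact (hgd u (by linarith [hu.1])).sub ((hasDerivAt_id u).const_mul M)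
        · intro u hu
          have := hg' u (by linarith [hu.1])
          linarith
      have h2 := anti hs (right_mem_Icc.mpr (by linarith)) hs.2
      simp only at h2
      have hMδ : M * δ = ε/2 := by
        rw [hδdef]; field_simp
      nlinarith [hs.1, hs.2]
    have anti2 : AntitoneOn (fun u => F u + (c*(ε/2))*u) (Icc (t-δ) t) := by
      apply myAnti (f' := fun u => F' u + (c*(ε/2))*1) (convex_Icc _ _)
      · intro u hu
        exact (hFd u (by linarith [hu.1])).add ((hasDerivAt_id u).const_mul _)
      · intro u hu
        have h1 := hF' u (by linarith [hu.1])
        have h2 := hglb u hu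
        nlinarith
    have h3 := anti2 (left_mem_Icc.mpr (by linarith)) (right_mem_Icc.mpr (by linarith)) (by linarith)
    simp only at h3
    rw [hΔdef]
    nlinarith
  have main : ∀ n : ℕ, ∃ t, a ≤ t ∧ F t ≤ F a - n * Δ := by
    intro n
    induction n with
    | zero => exact ⟨a, le_refl a, by simp⟩
    | succ n ih =>
      obtain ⟨s, hsa, hFs⟩ := ih
      obtain ⟨t, ht, hdist⟩ := hfreq (max s a + δ)
      have h1 : a + δ ≤ t := le_trans (by simp [le_max_right]) ht
      have h2 : s ≤ t - δ := by
        have := le_max_left s a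
        have : max s a + δ ≤ t := ht
        linarith [le_max_left s a]
      have h3 : a ≤ t - δ := by linarith
      have hgt : ε ≤ g t := by
        rw [Real.dist_eq, sub_zero, abs_of_nonneg (hg0 t (by linarith))] at hdist
        exact hdist
      have h4 := step t h1 hgt
      have h5 := hFanti (mem_Ici.mpr hsa) (mem_Ici.mpr h3) h2
      refine ⟨t, by linarith, ?_⟩
      push_cast
      linarith
  obtain ⟨n, hn⟩ := exists_nat_gt (F a / Δ)
  obtain ⟨t, hta, hFt⟩ := main n
  have h6 := hF0 t hta
  have h7 : F a < n * Δ := by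
    rw [div_lt_iff₀ hΔ] at hn
    linarith
  linarith


/-- Proposition 1 -/
theorem stmt3 (H ρm ρr y φ V χ : ℝ → ℝ) (γ t₀ K : ℝ)
    (hγ0 : 0 < γ) (hγ2 : γ < 2) (hγ43 : γ ≠ 4/3)
    (hχpos : ∀ s, 0 < χ s)
    (hVC2 : ContDiff ℝ 2 V) (hχC2 : ContDiff ℝ 2 χ)
    (hVnn : ∀ s, 0 ≤ V s)
    (hVzero : ∀ s, V s = 0 ↔ s = 0)
    (hV'bdd : ∀ A : Set ℝ, (∃ B, ∀ s ∈ A, V s ≤ B) → ∃ B', ∀ s ∈ A, |deriv V s| ≤ B')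
    (hK : K ≠ 0)
    (hχbd : ∀ s, deriv χ s / χ s ≤ 2*K / ((2-γ)*(4-3*γ)))
    (hH : ∀ t, t₀ ≤ t →
      HasDerivAt H (-(1/2) * (γ * ρm t + (4/3) * ρr t + (y t)^2)) t)
    (hm : ∀ t, t₀ ≤ t →
      HasDerivAt ρm (-3*γ*H t*ρm t - (1/2)*(4-3*γ)*ρm t*y t*(deriv χ (φ t) / χ (φ t))) t)
    (hr : ∀ t, t₀ ≤ t → HasDerivAt ρr (-4*H t*ρr t) t)
    (hy : ∀ t, t₀ ≤ t →
      HasDerivAt y (-3*H t*y t - deriv V (φ t) + (1/2)*(4-3*γ)*ρm t*(deriv χ (φ t) / χ (φ t))) t)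
    (hφ : ∀ t, t₀ ≤ t → HasDerivAt φ (y t) t)
    (hconstraint : ∀ t, t₀ ≤ t →
      3*(H t)^2 = (1/2)*(y t)^2 + V (φ t) + ρm t + ρr t)
    (hmnn : ∀ t, t₀ ≤ t → 0 ≤ ρm t)
    (hrnn : ∀ t, t₀ ≤ t → 0 ≤ ρr t)
    (hH0 : 0 < H t₀) :
    Tendsto ρm atTop (nhds 0) ∧ Tendsto ρr atTop (nhds 0) ∧
      Tendsto y atTop (nhds 0) := by
  -- H is positive on [t₀, ∞)
  have hpos : ∀ t, t₀ ≤ t → 0 < H t := by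
    by_contra hcon
    push_neg at hcon
    obtain ⟨t₁, ht₁, hH1⟩ := hcon
    set S := {t | t ∈ Icc t₀ t₁ ∧ H t ≤ 0} with hSdef
    have hne : S.Nonempty := ⟨t₁, ⟨ht₁, le_refl _⟩, hH1⟩
    have hbdd : BddBelow S := ⟨t₀, fun x hx => hx.1.1⟩
    have hcontOn : ContinuousOn H (Icc t₀ t₁) :=
      fun x hx => ((hH x hx.1).continuousAt).continuousWithinAt
    have hclosed : IsClosed S := by
      have : S = Icc t₀ t₁ ∩ H ⁻¹' (Iic 0) := by
        ext x; simp [hSdef, and_comm]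
      rw [this]
      exact hcontOn.preimage_isClosed_of_isClosed isClosed_Icc isClosed_Iic
    set c := sInf S with hcdef
    have hcS : c ∈ S := hclosed.csInf_mem hne hbdd
    have hc0 : t₀ < c := by
      rcases lt_or_eq_of_le hcS.1.1 with h | h
      · exact h
      · exfalso; rw [← h] at hcS; linarith [hcS.2]
    have hlt : ∀ s, t₀ ≤ s → s < c → 0 < H s := by
      intro s hs hsc
      by_contra h
      push_neg at h
      exact absurd (csInf_le hbdd ⟨⟨hs, le_trans hsc.le hcS.1.2⟩, h⟩) (not_le.mpr hsc)
    -- the derivative bound: -H' ≤ 3 H^2 on [t₀, c)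
    set D : ℝ → ℝ := fun t => -(1/2) * (γ * ρm t + (4/3) * ρr t + (y t)^2) with hDdef
    have hDbd : ∀ s, t₀ ≤ s → -(D s) ≤ 3 * (H s)^2 := by
      intro s hs
      have h1 := hconstraint s hs
      have h2 := hmnn s hs
      have h3 := hrnn s hs
      have h4 := hVnn (φ s)
      simp only [hDdef]
      nlinarith [sq_nonneg (y s)]
    -- inverse bound on [t₀, c)
    have key : ∀ s, t₀ ≤ s → s < c → (H s)⁻¹ - 3*s ≤ (H t₀)⁻¹ - 3*t₀ := by
      intro s hs hsc
      have anti : AntitoneOn (fun u => (H u)⁻¹ - 3*u) (Icc t₀ s) := by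
        apply myAnti (f' := fun u => -(D u) / (H u)^2 - 3*1) (convex_Icc _ _)
        · intro u hu
          have hu0 : t₀ ≤ u := hu.1
          have hpos : 0 < H u := hlt u hu0 (lt_of_le_of_lt hu.2 hsc)
          exact ((hH u hu0).inv (ne_of_gt hpos)).sub ((hasDerivAt_id u).const_mul 3)
        · intro u hu
          have hu0 : t₀ ≤ u := hu.1
          have hpos : 0 < H u := hlt u hu0 (lt_of_le_of_lt hu.2 hsc)
          have hb := hDbd u hu0
          have hsq : 0 < (H u)^2 := by positivity
          have h5 : -(D u) / (H u)^2 ≤ 3 := by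
            rw [div_le_iff₀ hsq]; linarith
          linarith
      have := anti (left_mem_Icc.mpr hs) (right_mem_Icc.mpr hs) hs
      simpa using this
    set B := (H t₀)⁻¹ + 3*(t₁ - t₀) with hBdef
    have hBpos : 0 < B := by
      have : 0 < (H t₀)⁻¹ := inv_pos.mpr hH0
      have : t₀ ≤ t₁ := ht₁
      simp only [hBdef]
      nlinarith
    have hHlb : ∀ s, t₀ ≤ s → s < c → B⁻¹ ≤ H s := by
      intro s hs hsc
      have h1 := key s hs hsc
      have hpos : 0 < H s := hlt s hs hsc
      have hsc1 : s ≤ t₁ := le_trans hsc.le hcS.1.2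
      have h2 : (H s)⁻¹ ≤ B := by simp only [hBdef]; nlinarith [inv_pos.mpr hpos]
      have h3 : 1 ≤ B * H s := by
        have := (inv_le_iff_one_le_mul₀ hpos).mp h2
        linarith [mul_comm (H s) B]
      rw [inv_le_iff_one_le_mul₀ hBpos]
      linarith [mul_comm (H s) B]
    -- limit at c
    have hHc : B⁻¹ ≤ H c := by
      have hcont : ContinuousAt H c := (hH c hcS.1.1).continuousAt
      have htend : Tendsto H (𝓝[<] c) (𝓝 (H c)) := hcont.continuousWithinAt
      apply ge_of_tendsto htend
      filter_upwards [self_mem_nhdsWithin, mem_nhdsWithin_of_mem_nhds (Ioi_mem_nhds hc0)]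
        with s hs1 hs2
      exact hHlb s (le_of_lt hs2) hs1
    have : 0 < B⁻¹ := inv_pos.mpr hBpos
    linarith [hcS.2]
  -- H is antitone on Ici t₀
  have hHanti : AntitoneOn H (Ici t₀) := by
    apply myAnti (f' := fun t => -(1/2) * (γ * ρm t + (4/3) * ρr t + (y t)^2)) (convex_Ici _)
    · exact fun t ht => hH t ht
    · intro t ht
      have h1 := hmnn t ht
      have h2 := hrnn t ht
      nlinarith [sq_nonneg (y t)]
  have hHub : ∀ t, t₀ ≤ t → H t ≤ H t₀ := fun t ht => hHanti (self_mem_Ici) ht ht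
  -- energy bounds
  have hEb : ∀ t, t₀ ≤ t → (1/2)*(y t)^2 + V (φ t) + ρm t + ρr t ≤ 3*(H t₀)^2 := by
    intro t ht
    rw [← hconstraint t ht]
    have h1 := hpos t ht
    have h2 := hHub t ht
    nlinarith
  -- V' bound
  obtain ⟨B', hB'⟩ := hV'bdd {s | V s ≤ 3*(H t₀)^2} ⟨3*(H t₀)^2, fun s hs => hs⟩
  have hφA : ∀ t, t₀ ≤ t → V (φ t) ≤ 3*(H t₀)^2 := by
    intro t ht
    have := hEb t ht
    have h1 := hmnn t ht
    have h2 := hrnn t ht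
    nlinarith [sq_nonneg (y t)]
  have hB'nn : 0 ≤ B' := le_trans (abs_nonneg _) (hB' _ (hφA t₀ le_rfl))
  set Y := Real.sqrt (6*(H t₀)^2) with hYdef
  have hYnn : 0 ≤ Y := Real.sqrt_nonneg _
  have hyb : ∀ t, t₀ ≤ t → |y t| ≤ Y := by
    intro t ht
    rw [← Real.sqrt_sq_eq_abs, hYdef]
    apply Real.sqrt_le_sqrt
    have := hEb t ht
    have h1 := hmnn t ht
    have h2 := hrnn t ht
    have h3 := hVnn (φ t)
    nlinarith
  -- the common "Lyapunov" function F = 2H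
  set F : ℝ → ℝ := fun t => 2 * H t with hFdef
  set F' : ℝ → ℝ := fun t => -(γ*ρm t + (4/3)*ρr t + (y t)*(y t)) with hF'def
  have hFd : ∀ t, t₀ ≤ t → HasDerivAt F (F' t) t := by
    intro t ht
    have := (hH t ht).const_mul 2
    convert this using 1
    · rfl
    · rfl
    simp only [hF'def]
    ring
  have hF0 : ∀ t, t₀ ≤ t → 0 ≤ F t := fun t ht => by
    simp only [hFdef]; linarith [hpos t ht]
  -- case (ii) : ρr → 0
  have hrz : Tendsto ρr atTop (𝓝 0) := by
    apply myBarbalat ρr (fun t => -4*H t*ρr t) F F' t₀ 1 (4/3) one_pos (by norm_num)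
      hrnn hr
    · intro t ht
      have h1 := hpos t ht
      have h2 := hrnn t ht
      nlinarith
    · exact hFd
    · intro t ht
      have h1 := hmnn t ht
      simp only [hF'def]
      nlinarith [mul_self_nonneg (y t)]
    · exact hF0
  -- case (i) : (1/2) y² + ρm → 0
  set g : ℝ → ℝ := fun t => 1/2 * (y t * y t) + ρm t with hgdef
  set g' : ℝ → ℝ := fun t => -3*H t*(y t*y t) - deriv V (φ t)*y t - 3*γ*H t*ρm t with hg'def
  set M := B'*Y + 1 with hMdef
  have hMpos : 0 < M := by positivity
  have hgz : Tendsto g atTop (𝓝 0) := by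
    apply myBarbalat g g' F F' t₀ M (min γ 1) hMpos (lt_min hγ0 one_pos)
    · intro t ht
      have h1 := hmnn t ht
      simp only [hgdef]
      nlinarith [mul_self_nonneg (y t)]
    · intro t ht
      have hd := (((hy t ht).mul (hy t ht)).const_mul (1/2)).add (hm t ht)
      convert hd using 1
      · rfl
      · rfl
      · rfl
      simp only [hg'def]
      ring
    · intro t ht
      have h1 := hpos t ht
      have h2 := hmnn t ht
      have h3 := hB' _ (hφA t ht)
      have h4 := hyb t ht
      have h5 : -(deriv V (φ t)*y t) ≤ B'*Y := by
        have h6 := abs_mul (deriv V (φ t)) (y t)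
        have h7 : |deriv V (φ t)| * |y t| ≤ B' * Y :=
          mul_le_mul h3 h4 (abs_nonneg _) hB'nn
        have h8 := neg_le_abs (deriv V (φ t) * y t)
        linarith
      simp only [hg'def, hMdef]
      nlinarith [mul_nonneg h1.le (mul_self_nonneg (y t)),
        mul_nonneg (mul_nonneg hγ0.le h1.le) h2]
    · exact hFd
    · intro t ht
      have h1 := hmnn t ht
      have h2 := hrnn t ht
      have h3 : min γ 1 ≤ γ := min_le_left _ _
      have h4 : min γ 1 ≤ 1 := min_le_right _ _
      have h5 : 0 < min γ 1 := lt_min hγ0 one_pos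
      simp only [hF'def, hgdef]
      nlinarith [mul_self_nonneg (y t)]
    · exact hF0
  -- extract the three limits
  have hmz : Tendsto ρm atTop (𝓝 0) := by
    apply squeeze_zero' (f := ρm) (g := g)
    · filter_upwards [eventually_ge_atTop t₀] with t ht
      exact hmnn t ht
    · filter_upwards [eventually_ge_atTop t₀] with t ht
      simp only [hgdef]
      nlinarith [mul_self_nonneg (y t)]
    · exact hgz
  have hyyz : Tendsto (fun t => y t * y t) atTop (𝓝 0) := by
    apply squeeze_zero' (f := fun t => y t * y t) (g := fun t => 2 * g t)
    · filter_upwards with t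
      exact mul_self_nonneg (y t)
    · filter_upwards [eventually_ge_atTop t₀] with t ht
      have := hmnn t ht
      simp only [hgdef]
      nlinarith
    · have h9 := hgz.const_mul 2
      simp only [mul_zero] at h9
      exact h9
  have hyz : Tendsto y atTop (𝓝 0) := by
    have habs : Tendsto (fun t => |y t|) atTop (𝓝 0) := by
      have h1 : Tendsto (fun t => Real.sqrt (y t * y t)) atTop (𝓝 (Real.sqrt 0)) :=
        hyyz.sqrt
      simp only [Real.sqrt_zero] at h1
      convert h1 using 2 with t
      rw [Real.sqrt_mul_self_eq_abs]
    apply squeeze_zero_norm _ habs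
    intro t
    exact le_refl _
  exact ⟨hmz, hrz, hyz⟩
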